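/- Let P be a Horn ℱ-program and M a model of P. Then the result R of the canonical P-computation with respect to M (X₀ = ∅, Xₙ₊₁ = hset(P(Xₙ)) ∩ M, R = ⋃ₙ Xₙ) is the largest derivable model of P contained in M: R is a derivable model, R ⊆ M, and every derivable model M' of P with M' ⊆ M satisfies M' ⊆ R. -/
import Mathlib


/-- An abstract-constraint clause: head constraint `hdC` over head set `hset`,
positive body literals `pos` and negated body literals `neg`, each a pair
(constraint, atom set). -/
structure ACClause (At : Type*) where
  hdC : Set (Set At)
  hset : Set At
  pos : List (Set (Set At) × Set At)
  neg : List (Set (Set At) × Set At)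

/-- M ⊨ C(X) iff M ∩ X ∈ C. -/
def satAtom {At : Type*} (M : Set At) (A : Set (Set At) × Set At) : Prop :=
  M ∩ A.2 ∈ A.1

def satBody {At : Type*} (M : Set At) (r : ACClause At) : Prop :=
  (∀ A ∈ r.pos, satAtom M A) ∧ (∀ A ∈ r.neg, ¬ satAtom M A)

def satHead {At : Type*} (M : Set At) (r : ACClause At) : Prop :=
  M ∩ r.hset ∈ r.hdC

/-- A constraint is monotone (upward closed). -/
def MonoC {At : Type*} (C : Set (Set At)) : Prop :=
  ∀ A A' : Set At, A ∈ C → A ⊆ A' → A' ∈ C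

def MonoClause {At : Type*} (r : ACClause At) : Prop :=
  MonoC r.hdC ∧ (∀ A ∈ r.pos, MonoC A.1) ∧ (∀ A ∈ r.neg, MonoC A.1)

/-- All atom sets of a clause are finite. -/
def FinClause {At : Type*} (r : ACClause At) : Prop :=
  r.hset.Finite ∧ (∀ A ∈ r.pos, A.2.Finite) ∧ (∀ A ∈ r.neg, A.2.Finite)

/-- The head constraint atom of `r` is consistent. -/
def ConsHead {At : Type*} (r : ACClause At) : Prop :=
  ∃ M : Set At, satHead M r

def Models {At : Type*} (M : Set At) (P : Set (ACClause At)) : Prop :=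
  ∀ r ∈ P, satBody M r → satHead M r

/-- The M-applicable clauses P(M). -/
def appl {At : Type*} (P : Set (ACClause At)) (M : Set At) : Set (ACClause At) :=
  {r ∈ P | satBody M r}

/-- hset(P(M)): union of head sets of M-applicable clauses. -/
def hsetP {At : Type*} (P : Set (ACClause At)) (M : Set At) : Set At :=
  ⋃ r ∈ appl P M, r.hset

/-- The nondeterministic one-step provability operator. -/
def Tnd {At : Type*} (P : Set (ACClause At)) (M : Set At) : Set (Set At) :=
  {M' | M' ⊆ hsetP P M ∧ ∀ r ∈ appl P M, satHead M' r}

/-- A monotone ℱ-program: all constraints monotone, all atom sets finite. -/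
def MonoProg {At : Type*} (P : Set (ACClause At)) : Prop :=
  ∀ r ∈ P, MonoClause r ∧ FinClause r

/-- A Horn ℱ-program: monotone, finite atom sets, no negation. -/
def Horn {At : Type*} (P : Set (ACClause At)) : Prop :=
  ∀ r ∈ P, r.neg = [] ∧ MonoClause r ∧ FinClause r

/-- A P-computation. -/
def IsComputation {At : Type*} (P : Set (ACClause At)) (t : ℕ → Set At) : Prop :=
  t 0 = ∅ ∧ ∀ n, t n ⊆ t (n + 1) ∧ t (n + 1) ∈ Tnd P (t n)

/-- M is a derivable model of P: the result of some P-computation. -/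
def Derivable {At : Type*} (P : Set (ACClause At)) (M : Set At) : Prop :=
  ∃ t, IsComputation P t ∧ M = ⋃ n, t n

def stripNeg {At : Type*} (r : ACClause At) : ACClause At :=
  { r with neg := [] }

/-- The reduct P^M. -/
def reduct {At : Type*} (P : Set (ACClause At)) (M : Set At) : Set (ACClause At) :=
  {r' | ∃ r ∈ P, (∀ A ∈ r.neg, ¬ satAtom M A) ∧ r' = stripNeg r}

/-- M is a stable model of P: M is a derivable model of the reduct P^M. -/
def Stable {At : Type*} (P : Set (ACClause At)) (M : Set At) : Prop :=
  Derivable (reduct P M) M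

/-- The canonical P-computation with respect to M. -/
def canon {At : Type*} (P : Set (ACClause At)) (M : Set At) : ℕ → Set At
  | 0 => ∅
  | n + 1 => hsetP P (canon P M n) ∩ M

/-- A definite head: the head set is a minimal element of the head constraint. -/
def DefHead {At : Type*} (r : ACClause At) : Prop :=
  r.hset ∈ r.hdC ∧ ∀ Y ∈ r.hdC, Y ⊆ r.hset → Y = r.hset

lemma horn_body_mono {At : Type*} {P : Set (ACClause At)} (hP : Horn P)
    {r : ACClause At} (hr : r ∈ P) {X Y : Set At} (hXY : X ⊆ Y)
    (h : satBody X r) : satBody Y r := by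
  obtain ⟨hneg, ⟨_, hmonoP, _⟩, _⟩ := hP r hr
  refine ⟨fun A hA => ?_, fun A hA => by simp [hneg] at hA⟩
  exact hmonoP A hA _ _ (h.1 A hA) (Set.inter_subset_inter_left _ hXY)

lemma hsetP_mono {At : Type*} {P : Set (ACClause At)} (hP : Horn P)
    {X Y : Set At} (hXY : X ⊆ Y) : hsetP P X ⊆ hsetP P Y := by
  refine Set.iUnion₂_subset fun r hr => ?_
  exact Set.subset_iUnion₂_of_subset r ⟨hr.1, horn_body_mono hP hr.1 hXY hr.2⟩
    subset_rfl

lemma canon_subset_M {At : Type*} (P : Set (ACClause At)) (M : Set At) :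
    ∀ n, canon P M n ⊆ M
  | 0 => by simp [canon]
  | n + 1 => Set.inter_subset_right

lemma canon_mono {At : Type*} {P : Set (ACClause At)} (hP : Horn P)
    (M : Set At) : ∀ n, canon P M n ⊆ canon P M (n + 1)
  | 0 => by simp [canon]
  | n + 1 =>
    Set.inter_subset_inter_left _ (hsetP_mono hP (canon_mono hP M n))

theorem stmt8 {At : Type*} (P : Set (ACClause At)) (hP : Horn P)
    (M : Set At) (hM : Models M P) :
    Derivable P (⋃ n, canon P M n) ∧ (⋃ n, canon P M n) ⊆ M ∧
      ∀ M' : Set At, Derivable P M' → M' ⊆ M → M' ⊆ ⋃ n, canon P M n := by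
  refine ⟨⟨canon P M, ⟨rfl, fun n => ⟨canon_mono hP M n, ?_⟩⟩, rfl⟩,
    Set.iUnion_subset fun n => canon_subset_M P M n, ?_⟩
  · refine ⟨Set.inter_subset_left, fun r hr => ?_⟩
    have hbodyM : satBody M r :=
      horn_body_mono hP hr.1 (canon_subset_M P M n) hr.2
    have hhead : M ∩ r.hset ∈ r.hdC := hM r hr.1 hbodyM
    have hsub : r.hset ⊆ hsetP P (canon P M n) :=
      Set.subset_iUnion₂_of_subset r hr subset_rfl
    have : canon P M (n + 1) ∩ r.hset = M ∩ r.hset := by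
      ext a
      constructor
      · rintro ⟨⟨_, haM⟩, ha⟩; exact ⟨haM, ha⟩
      · rintro ⟨haM, ha⟩; exact ⟨⟨hsub ha, haM⟩, ha⟩
    show canon P M (n + 1) ∩ r.hset ∈ r.hdC
    rw [this]; exact hhead
  · rintro M' ⟨t, ⟨ht0, htstep⟩, rfl⟩ hM'M
    have key : ∀ n, t n ⊆ canon P M n := by
      intro n
      induction n with
      | zero => rw [ht0]; exact Set.empty_subset _
      | succ n ih =>
        obtain ⟨hsub, hhead⟩ := (htstep n).2
        intro a ha
        refine ⟨hsetP_mono hP ih (hsub ha), hM'M ?_⟩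
        exact Set.mem_iUnion.2 ⟨n + 1, ha⟩
    exact Set.iUnion_mono key
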